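/- Fix a dimension d and a stationary ergodic cyclically monotone Poisson matching ensemble in dimension d. For every ε > 0 there exists a deterministic L < ∞ such that for P-almost every ω there is r*(ω) < ∞ with the property that for every R ≥ r*(ω): Q(ω)({(x,y) ∈ ℝ^d × ℝ^d : x ∈ (−R,R)^d and |y − x| > L}) ≤ (εR)^d. -/

import Mathlib

open MeasureTheory ProbabilityTheory Filter

noncomputable section

/-- Euclidean space `ℝ^d`. -/
abbrev Euc (d : ℕ) := EuclideanSpace ℝ (Fin d)

/-- The vector of `ℝ^d` corresponding to an integer vector `z ∈ ℤ^d`. -/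
def intVec (d : ℕ) (z : Fin d → ℤ) : Euc d := WithLp.toLp 2 (fun i => (z i : ℝ))

/-- `μ : Ω → Measure (ℝ^d)` is a unit-intensity Poisson point process under `P`:
the counts of Borel sets of finite Lebesgue measure are Poisson distributed with the
Lebesgue measure as parameter, and counts of pairwise disjoint sets are independent. -/
def IsPoissonPP {Ω : Type*} [MeasurableSpace Ω] (d : ℕ) (P : Measure Ω)
    (μ : Ω → Measure (Euc d)) : Prop :=
  (∀ A : Set (Euc d), MeasurableSet A → volume A ≠ ⊤ → ∀ k : ℕ,
    P {ω | μ ω A = k} =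
      ENNReal.ofReal (Real.exp (-(volume A).toReal) * (volume A).toReal ^ k /
        (Nat.factorial k))) ∧
  (∀ (m : ℕ) (A : Fin m → Set (Euc d)),
    (∀ i, MeasurableSet (A i)) → (∀ i, volume (A i) ≠ ⊤) →
    Pairwise (Function.onFun Disjoint A) →
    iIndepFun (fun i ω => μ ω (A i)) P)

/-- A set `S ⊆ ℝ^d × ℝ^d` is cyclically monotone: for any cycle of points of `S`,
`∑ₙ yₙ · (xₙ - xₙ₋₁) ≥ 0` (indices cyclic). -/
def CyclicallyMonotoneSet {d : ℕ} (S : Set (Euc d × Euc d)) : Prop :=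
  ∀ (N : ℕ) (p : Fin (N + 1) → Euc d × Euc d), (∀ n, p n ∈ S) →
    0 ≤ ∑ n : Fin (N + 1), (inner ℝ ((p n).2) ((p n).1 - (p (n - 1)).1) : ℝ)

/-- The (topological) support of a measure: points all of whose neighbourhoods have
positive measure. -/
def msupport {X : Type*} [TopologicalSpace X] [MeasurableSpace X] (π : Measure X) : Set X :=
  {x | ∀ U ∈ nhds x, π U ≠ 0}

/-- A stationary ergodic cyclically monotone Poisson matching ensemble in dimension `d`:
independent unit-intensity Poisson point processes `μ, ν` on `ℝ^d`, a coupling `Q` with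
marginals `μ, ν` and cyclically monotone support, and an ergodic measure-preserving
`ℤ^d`-action `θ` under which `(μ, ν, Q)` is equivariant. -/
structure PoissonMatchingEnsemble (d : ℕ) (Ω : Type*) [MeasurableSpace Ω] where
  P : Measure Ω
  isProb : IsProbabilityMeasure P
  μ : Ω → Measure (Euc d)
  ν : Ω → Measure (Euc d)
  Q : Ω → Measure (Euc d × Euc d)
  μ_meas : Measurable μ
  ν_meas : Measurable ν
  Q_meas : Measurable Q
  μ_poisson : IsPoissonPP d P μ
  ν_poisson : IsPoissonPP d P ν
  indep : IndepFun μ ν P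
  marg_fst : ∀ᵐ ω ∂P, (Q ω).map Prod.fst = μ ω
  marg_snd : ∀ᵐ ω ∂P, (Q ω).map Prod.snd = ν ω
  cyclMono : ∀ᵐ ω ∂P, CyclicallyMonotoneSet (msupport (Q ω))
  θ : (Fin d → ℤ) → Ω → Ω
  θ_measurePreserving : ∀ z, MeasurePreserving (θ z) P P
  θ_zero : θ 0 = id
  θ_add : ∀ z z', θ (z + z') = θ z ∘ θ z'
  ergodic : ∀ A : Set Ω, MeasurableSet A → (∀ z, θ z ⁻¹' A = A) → P A = 0 ∨ P A = 1
  μ_equivariant : ∀ z, ∀ᵐ ω ∂P, μ (θ z ω) = (μ ω).map (fun x => x + intVec d z)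
  ν_equivariant : ∀ z, ∀ᵐ ω ∂P, ν (θ z ω) = (ν ω).map (fun x => x + intVec d z)
  Q_equivariant : ∀ z, ∀ᵐ ω ∂P,
    Q (θ z ω) = (Q ω).map (fun p => (p.1 + intVec d z, p.2 + intVec d z))



open Filter Finset
open scoped ENNReal

namespace ErgAux

variable {d : ℕ}

abbrev ZD (d : ℕ) := Fin d → ℤ

/-- The discrete box `[-m,m]^d`. -/
def BB (d m : ℕ) : Finset (ZD d) := Fintype.piFinset fun _ => Finset.Icc (-(m : ℤ)) m

/-- Discrete ℓ∞ ball. -/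
def ballZ (x : ZD d) (ρ : ℕ) : Finset (ZD d) :=
  Fintype.piFinset fun i => Finset.Icc (x i - ρ) (x i + ρ)

lemma mem_BB {m : ℕ} {z : ZD d} : z ∈ BB d m ↔ ∀ i, -(m : ℤ) ≤ z i ∧ z i ≤ m := by
  simp [BB, Fintype.mem_piFinset]

lemma mem_ballZ {x y : ZD d} {ρ : ℕ} :
    y ∈ ballZ x ρ ↔ ∀ i, x i - ρ ≤ y i ∧ y i ≤ x i + ρ := by
  simp [ballZ, Fintype.mem_piFinset]

lemma self_mem_ballZ (x : ZD d) (ρ : ℕ) : x ∈ ballZ x ρ := by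
  rw [mem_ballZ]; intro i; omega

lemma card_BB (m : ℕ) : (BB d m).card = (2 * m + 1) ^ d := by
  simp [BB, Fintype.card_piFinset, Int.card_Icc]
  congr 1; omega

lemma card_ballZ (x : ZD d) (ρ : ℕ) : (ballZ x ρ).card = (2 * ρ + 1) ^ d := by
  simp [ballZ, Fintype.card_piFinset, Int.card_Icc]
  have : ∀ i : Fin d, (x i + ρ + 1 - (x i - ρ)).toNat = 2 * ρ + 1 := by intro i; omega
  simp [this]

lemma ballZ_subset_BB {x : ZD d} {ρ N M : ℕ} (hx : x ∈ BB d N) (hρ : ρ ≤ M) :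
    ballZ x ρ ⊆ BB d (N + M) := by
  intro y hy
  rw [mem_ballZ] at hy
  rw [mem_BB] at hx ⊢
  intro i
  have h1 := hy i; have h2 := hx i
  push_cast at *
  omega

/-- Finite Vitali covering lemma on `ℤ^d` with ℓ∞ balls. -/
lemma vitali (r : ZD d → ℕ) :
    ∀ (n : ℕ) (E : Finset (ZD d)), E.card ≤ n →
    ∃ D ⊆ E, ((D : Set (ZD d)).PairwiseDisjoint fun x => ballZ x (r x)) ∧
      ∀ x ∈ E, ∃ y ∈ D, r x ≤ r y ∧ ¬ Disjoint (ballZ x (r x)) (ballZ y (r y)) := by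
  intro n
  induction n with
  | zero =>
    intro E hE
    have : E = ∅ := Finset.card_eq_zero.1 (Nat.le_zero.1 hE)
    subst this
    exact ⟨∅, Finset.Subset.refl _, by simp, by simp⟩
  | succ n ih =>
    intro E hE
    rcases E.eq_empty_or_nonempty with h | hne
    · subst h; exact ⟨∅, Finset.Subset.refl _, by simp, by simp⟩
    · obtain ⟨x₀, hx₀E, hx₀max⟩ := E.exists_max_image r hne
      set E' := E.filter (fun x => Disjoint (ballZ x (r x)) (ballZ x₀ (r x₀))) with hE'
      have hx₀notE' : x₀ ∉ E' := by
        simp only [hE', Finset.mem_filter]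
        rintro ⟨-, hdisj⟩
        exact absurd (hdisj.le_bot (by
          simp [Finset.mem_inter, self_mem_ballZ] :
            x₀ ∈ ballZ x₀ (r x₀) ⊓ ballZ x₀ (r x₀))) (by simp)
      have hE'card : E'.card ≤ n := by
        have h1 : E' ⊆ E.erase x₀ :=
          fun x hx => Finset.mem_erase.2 ⟨fun h => hx₀notE' (h ▸ hx),
            (Finset.filter_subset _ _) hx⟩
        have := Finset.card_le_card h1
        rw [Finset.card_erase_of_mem hx₀E] at this
        omega
      obtain ⟨D', hD'sub, hdisj, hcov⟩ := ih E' hE'card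
      refine ⟨insert x₀ D', ?_, ?_, ?_⟩
      · exact Finset.insert_subset hx₀E (hD'sub.trans (Finset.filter_subset _ _))
      · rw [Finset.coe_insert]
        refine hdisj.insert ?_
        intro y hy _
        have : Disjoint (ballZ y (r y)) (ballZ x₀ (r x₀)) :=
          (Finset.mem_filter.1 (hD'sub hy)).2
        exact this.symm
      · intro x hx
        by_cases hcase : Disjoint (ballZ x (r x)) (ballZ x₀ (r x₀))
        · obtain ⟨y, hyD', hry, hnd⟩ := hcov x (Finset.mem_filter.2 ⟨hx, hcase⟩)
          exact ⟨y, Finset.mem_insert_of_mem hyD', hry, hnd⟩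
        · exact ⟨x₀, Finset.mem_insert_self _ _, hx₀max x hx, hcase⟩

/-- Discrete maximal-function covering bound. -/
lemma discrete_maximal (η : ℝ≥0∞) (F : ZD d → ℝ≥0∞) (N M : ℕ)
    (E : Finset (ZD d)) (hEsub : E ⊆ BB d N) (r : ZD d → ℕ)
    (hrM : ∀ x ∈ E, r x ≤ M)
    (hbig : ∀ x ∈ E, η * ((2 * r x + 1) ^ d : ℕ) < ∑ y ∈ ballZ x (r x), F y) :
    (E.card : ℝ≥0∞) * η ≤ 2 ^ d * ∑ y ∈ BB d (N + M), F y := by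
  obtain ⟨D, hDsub, hdisj, hcov⟩ := vitali r E.card E le_rfl
  -- E is covered by the doubled balls around D
  have hcover : E ⊆ D.biUnion fun y => ballZ y (2 * r y) := by
    intro x hx
    obtain ⟨y, hyD, hry, hnd⟩ := hcov x hx
    rw [Finset.not_disjoint_iff] at hnd
    obtain ⟨w, hw1, hw2⟩ := hnd
    rw [mem_ballZ] at hw1 hw2
    refine Finset.mem_biUnion.2 ⟨y, hyD, mem_ballZ.2 fun i => ?_⟩
    have h1 := hw1 i; have h2 := hw2 i
    push_cast at *
    omega
  have hcard : E.card ≤ 2 ^ d * ∑ y ∈ D, ((2 * r y + 1) ^ d : ℕ) := by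
    calc E.card ≤ (D.biUnion fun y => ballZ y (2 * r y)).card :=
        Finset.card_le_card hcover
      _ ≤ ∑ y ∈ D, (ballZ y (2 * r y)).card := Finset.card_biUnion_le
      _ ≤ ∑ y ∈ D, 2 ^ d * (2 * r y + 1) ^ d := by
          refine Finset.sum_le_sum fun y _ => ?_
          rw [card_ballZ]
          calc (2 * (2 * r y) + 1) ^ d ≤ (2 * (2 * r y + 1)) ^ d :=
              Nat.pow_le_pow_left (by omega) d
            _ = 2 ^ d * (2 * r y + 1) ^ d := Nat.mul_pow 2 _ d
      _ = 2 ^ d * ∑ y ∈ D, (2 * r y + 1) ^ d := (Finset.mul_sum _ _ _).symm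
  calc (E.card : ℝ≥0∞) * η
      ≤ ((2 ^ d * ∑ y ∈ D, ((2 * r y + 1) ^ d : ℕ) : ℕ) : ℝ≥0∞) * η := by
        exact mul_le_mul_left (by exact_mod_cast Nat.cast_le.2 hcard) η
    _ = 2 ^ d * ∑ y ∈ D, (((2 * r y + 1) ^ d : ℕ) : ℝ≥0∞) * η := by
        push_cast
        rw [mul_assoc, Finset.sum_mul]
    _ ≤ 2 ^ d * ∑ y ∈ D, ∑ w ∈ ballZ y (r y), F w := by
        refine mul_le_mul_right (Finset.sum_le_sum fun y hy => ?_) _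
        rw [mul_comm]
        exact (hbig y (hDsub hy)).le
    _ = 2 ^ d * ∑ w ∈ D.biUnion (fun y => ballZ y (r y)), F w := by
        rw [Finset.sum_biUnion hdisj]
    _ ≤ 2 ^ d * ∑ y ∈ BB d (N + M), F y := by
        refine mul_le_mul_right (Finset.sum_le_sum_of_subset ?_) _
        intro w hw
        obtain ⟨y, hyD, hyball⟩ := Finset.mem_biUnion.1 hw
        exact ballZ_subset_BB (hEsub (hDsub hyD)) (hrM y (hDsub hyD)) hyball

end ErgAux

namespace ErgAux

open MeasureTheory ProbabilityTheory Filter Set Topology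
open scoped ENNReal

section Main

variable {d : ℕ} {Ω : Type*} [MeasurableSpace Ω] (ens : PoissonMatchingEnsemble d Ω)

/-- The half-open unit cube based at `w ∈ ℤ^d`. -/
def cube (w : ZD d) : Set (Euc d) := {x | ∀ i, (w i : ℝ) ≤ x i ∧ x i < w i + 1}

/-- Pairs whose first coordinate is in `cube w` and which are matched at distance `> L`. -/
def Sset (L : ℝ) (w : ZD d) : Set (Euc d × Euc d) :=
  {p | p.1 ∈ cube w ∧ L < ‖p.2 - p.1‖}

lemma measurable_coord (i : Fin d) : Measurable fun x : Euc d => x i :=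
  (measurable_pi_apply i).comp (MeasurableEquiv.toLp 2 (Fin d → ℝ)).symm.measurable

lemma measurableSet_cube (w : ZD d) : MeasurableSet (cube w) := by
  have : cube w = ⋂ i, {x : Euc d | (w i : ℝ) ≤ x i} ∩ {x : Euc d | x i < w i + 1} := by
    ext x; simp [cube, forall_and]
  rw [this]
  exact MeasurableSet.iInter fun i =>
    ((measurableSet_le measurable_const (measurable_coord i)).inter
      (measurableSet_lt (measurable_coord i) measurable_const))

lemma measurableSet_Sset (L : ℝ) (w : ZD d) : MeasurableSet (Sset (d := d) L w) := by
  have h1 : MeasurableSet {p : Euc d × Euc d | p.1 ∈ cube w} :=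
    measurable_fst (measurableSet_cube w)
  have h2 : MeasurableSet {p : Euc d × Euc d | L < ‖p.2 - p.1‖} :=
    measurableSet_lt measurable_const (continuous_snd.sub continuous_fst).norm.measurable
  exact h1.inter h2

lemma volume_cube_ne_top : volume (cube (0 : ZD d)) ≠ ⊤ := by
  have hc : cube (0 : ZD d) =
      ((MeasurableEquiv.toLp 2 (Fin d → ℝ)).symm) ⁻¹' (Set.univ.pi fun _ : Fin d => Set.Ico (0:ℝ) 1) := by
    ext x
    simp only [cube, Set.mem_setOf_eq, Set.mem_preimage, Set.mem_pi, Set.mem_univ,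
      forall_const, Set.mem_Ico, Pi.zero_apply, Int.cast_zero, zero_add]
    exact Iff.rfl
  rw [hc, (EuclideanSpace.volume_preserving_symm_measurableEquiv_toLp (Fin d)).measure_preimage
    (MeasurableSet.univ_pi fun _ => measurableSet_Ico).nullMeasurableSet]
  simp [volume_pi_pi]

/-- The long-edge mass of the unit cube at the origin. -/
def fe (L : ℝ) (ω : Ω) : ℝ≥0∞ := ens.Q ω (Sset L 0)

lemma measurable_fe (L : ℝ) : Measurable (fe ens L) :=
  (Measure.measurable_coe (measurableSet_Sset L 0)).comp ens.Q_meas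

/-- First moment of a Poisson count is finite. -/
lemma lintegral_mu_cube_ne_top :
    ∫⁻ ω, ens.μ ω (cube (0 : ZD d)) ∂ens.P ≠ ⊤ := by
  haveI := ens.isProb
  set A := cube (0 : ZD d) with hA
  set lam := (volume A).toReal with hlam
  have hlam0 : 0 ≤ lam := ENNReal.toReal_nonneg
  have hX : Measurable fun ω => ens.μ ω A :=
    (Measure.measurable_coe (measurableSet_cube 0)).comp ens.μ_meas
  have hpk : ∀ k : ℕ, ens.P {ω | ens.μ ω A = k} =
      ENNReal.ofReal (Real.exp (-lam) * lam ^ k / k.factorial) :=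
    fun k => ens.μ_poisson.1 A (measurableSet_cube 0) volume_cube_ne_top k
  set E : ℕ → Set Ω := fun k => {ω | ens.μ ω A = (k : ℝ≥0∞)} with hE
  have hEm : ∀ k, MeasurableSet (E k) := fun k => hX (measurableSet_singleton _)
  have hdisj : Pairwise (Function.onFun Disjoint E) := by
    intro j k hjk
    refine Set.disjoint_left.2 fun ω hj hk => hjk ?_
    have h1 : ((j : ℕ) : ℝ≥0∞) = k := by rw [← hj, ← hk]
    exact_mod_cast h1
  have hsummable : Summable (fun k : ℕ => Real.exp (-lam) * (lam ^ k / k.factorial)) :=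
    (Real.summable_pow_div_factorial lam).mul_left _
  have hsum1 : (∑' k : ℕ, ens.P (E k)) = 1 := by
    calc ∑' k, ens.P (E k)
        = ∑' k, ENNReal.ofReal (Real.exp (-lam) * (lam ^ k / k.factorial)) := by
          refine tsum_congr fun k => ?_
          rw [hpk k]; congr 1; ring
      _ = ENNReal.ofReal (∑' k, Real.exp (-lam) * (lam ^ k / k.factorial)) :=
          (ENNReal.ofReal_tsum_of_nonneg (fun k => by positivity) hsummable).symm
      _ = 1 := by
          have ht : (∑' k : ℕ, lam ^ k / k.factorial) = Real.exp lam := by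
            rw [Real.exp_eq_exp_ℝ, NormedSpace.exp_eq_tsum_div]
          rw [tsum_mul_left, ht, ← Real.exp_add]
          simp
  have hUm : MeasurableSet (⋃ k, E k) := MeasurableSet.iUnion hEm
  have hUc : ens.P (⋃ k, E k)ᶜ = 0 := by
    have h1 : ens.P (⋃ k, E k) = 1 := by
      rw [measure_iUnion hdisj hEm, hsum1]
    rw [measure_compl hUm (by simp [h1]), h1, measure_univ, tsub_self]
  have hsplit :
      ∫⁻ ω, ens.μ ω A ∂ens.P
        = ∑' k : ℕ, (k : ℝ≥0∞) * ens.P (E k) := by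
    rw [← lintegral_add_compl (fun ω => ens.μ ω A) hUm,
      setLIntegral_measure_zero _ _ hUc, add_zero,
      lintegral_iUnion hEm hdisj]
    refine tsum_congr fun k => ?_
    rw [setLIntegral_congr_fun (hEm k)
      (fun ω hω => hω), setLIntegral_const,
      hE]
  rw [hsplit]
  have hbound : ∀ k : ℕ, (k : ℝ≥0∞) * ens.P (E k) ≤
      ENNReal.ofReal (Real.exp (-lam) * ((2 * lam) ^ k / k.factorial)) := by
    intro k
    rw [hpk k, ← ENNReal.ofReal_natCast k, ← ENNReal.ofReal_mul (by positivity)]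
    refine ENNReal.ofReal_le_ofReal ?_
    have hk2 : (k : ℝ) ≤ 2 ^ k := by exact_mod_cast (Nat.lt_two_pow_self (n := k)).le
    have hfac : (0:ℝ) < k.factorial := by exact_mod_cast k.factorial_pos
    calc (k:ℝ) * (Real.exp (-lam) * lam ^ k / k.factorial)
        = Real.exp (-lam) * (((k:ℝ) * lam ^ k) / k.factorial) := by ring
      _ ≤ Real.exp (-lam) * ((2 ^ k * lam ^ k) / k.factorial) := by
          have : ((k:ℝ) * lam ^ k) ≤ 2 ^ k * lam ^ k :=
            mul_le_mul_of_nonneg_right hk2 (pow_nonneg hlam0 k)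
          exact mul_le_mul_of_nonneg_left
            (div_le_div_of_nonneg_right this hfac.le) (Real.exp_nonneg _)
      _ = Real.exp (-lam) * ((2 * lam) ^ k / k.factorial) := by rw [mul_pow]
  refine ne_of_lt (lt_of_le_of_lt (ENNReal.tsum_le_tsum hbound) ?_)
  have hsummable2 : Summable (fun k : ℕ => Real.exp (-lam) * ((2*lam) ^ k / k.factorial)) :=
    (Real.summable_pow_div_factorial (2*lam)).mul_left _
  rw [← ENNReal.ofReal_tsum_of_nonneg (fun k => by positivity) hsummable2]
  exact ENNReal.ofReal_lt_top

lemma ae_fe_le_mu : ∀ᵐ ω ∂ens.P, ∀ L : ℝ, fe ens L ω ≤ ens.μ ω (cube (0 : ZD d)) := by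
  filter_upwards [ens.marg_fst] with ω hω L
  have h1 : Sset L (0 : ZD d) ⊆ Prod.fst ⁻¹' cube (0 : ZD d) := fun p hp => hp.1
  calc fe ens L ω ≤ ens.Q ω (Prod.fst ⁻¹' cube (0 : ZD d)) := measure_mono h1
    _ = (ens.Q ω).map Prod.fst (cube (0 : ZD d)) :=
        (Measure.map_apply measurable_fst (measurableSet_cube 0)).symm
    _ = ens.μ ω (cube (0 : ZD d)) := by rw [hω]

lemma tendsto_lintegral_fe :
    Tendsto (fun n : ℕ => ∫⁻ ω, fe ens (n : ℝ) ω ∂ens.P) atTop (𝓝 0) := by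
  have hX : Measurable fun ω => ens.μ ω (cube (0 : ZD d)) :=
    (Measure.measurable_coe (measurableSet_cube 0)).comp ens.μ_meas
  have h := tendsto_lintegral_of_dominated_convergence
    (μ := ens.P) (F := fun n ω => fe ens (n : ℝ) ω) (f := fun _ => 0)
    (fun ω => ens.μ ω (cube (0 : ZD d)))
    (fun n => measurable_fe ens _)
    (fun n => by filter_upwards [ae_fe_le_mu ens] with ω hω using hω (n : ℝ))
    (lintegral_mu_cube_ne_top ens) ?_
  · simpa using h
  · filter_upwards [ae_fe_le_mu ens, ae_lt_top hX (lintegral_mu_cube_ne_top ens)]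
      with ω hle hfin
    have hanti : Antitone fun n : ℕ => Sset (d := d) (n : ℝ) 0 := by
      intro n m hnm p hp
      exact ⟨hp.1, lt_of_le_of_lt (by exact_mod_cast hnm) hp.2⟩
    have hempty : ⋂ n : ℕ, Sset (d := d) (n : ℝ) 0 = ∅ := by
      ext p
      simp only [Set.mem_iInter, Set.mem_empty_iff_false, iff_false, not_forall]
      obtain ⟨n, hn⟩ := exists_nat_gt ‖p.2 - p.1‖
      exact ⟨n, fun hp => absurd hp.2 (not_lt.2 hn.le)⟩
    have := tendsto_measure_iInter_atTop (μ := ens.Q ω)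
      (s := fun n : ℕ => Sset (n : ℝ) 0)
      (fun n => (measurableSet_Sset (n : ℝ) 0).nullMeasurableSet) hanti
      ⟨0, show ens.Q ω (Sset ((0:ℕ):ℝ) 0) ≠ ⊤ from (lt_of_le_of_lt (hle _) hfin).ne⟩
    rw [hempty, measure_empty] at this
    exact this

/-- Sum of the long-edge function over a discrete box of translates. -/
def SS (L : ℝ) (m : ℕ) (ω : Ω) : ℝ≥0∞ := ∑ z ∈ BB d m, fe ens L (ens.θ z ω)

/-- Normalization constant `(2m+1)^d`. -/
def cst (d m : ℕ) : ℝ≥0∞ := (((2 * m + 1) ^ d : ℕ) : ℝ≥0∞)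

lemma cst_ne_zero (m : ℕ) : cst d m ≠ 0 := by
  simp [cst]

lemma cst_ne_top (m : ℕ) : cst d m ≠ ⊤ := ENNReal.natCast_ne_top _

/-- Box average. -/
def avg (L : ℝ) (m : ℕ) (ω : Ω) : ℝ≥0∞ := (cst d m)⁻¹ * SS ens L m ω

/-- Limsup of box averages. -/
def slim (L : ℝ) (ω : Ω) : ℝ≥0∞ := limsup (fun m => avg ens L m ω) atTop

lemma measurable_SS (L : ℝ) (m : ℕ) : Measurable (SS ens L m) :=
  Finset.measurable_sum _ fun z _ =>
    (measurable_fe ens L).comp (ens.θ_measurePreserving z).measurable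

lemma measurable_avg (L : ℝ) (m : ℕ) : Measurable (avg ens L m) :=
  (measurable_SS ens L m).const_mul _

lemma measurable_slim (L : ℝ) : Measurable (slim ens L) := by
  unfold slim
  simp only [limsup_eq_iInf_iSup_of_nat]
  exact Measurable.iInf fun n => Measurable.iSup fun m => Measurable.iSup fun _ =>
    measurable_avg ens L m

/-- The box sum at a shifted point is a ball sum. -/
lemma SS_comp (L : ℝ) (m : ℕ) (x : ZD d) (ω : Ω) :
    SS ens L m (ens.θ x ω) = ∑ y ∈ ballZ x m, fe ens L (ens.θ y ω) := by
  unfold SS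
  refine Finset.sum_nbij' (fun z => z + x) (fun y => y - x) ?_ ?_ ?_ ?_ ?_
  · intro z hz
    rw [mem_BB] at hz
    rw [mem_ballZ]
    intro i
    have := hz i
    simp only [Pi.add_apply]
    omega
  · intro y hy
    rw [mem_ballZ] at hy
    rw [mem_BB]
    intro i
    have := hy i
    simp only [Pi.sub_apply]
    omega
  · intro z _; simp
  · intro y _; simp
  · intro z _
    have hcomp := congrFun (ens.θ_add z x) ω
    simp only [Function.comp_apply] at hcomp
    rw [← hcomp]

/-- Maximal inequality via transference. -/
lemma maximal_ineq (L : ℝ) {η : ℝ≥0∞} (hη0 : η ≠ 0) (hηt : η ≠ ⊤) :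
    ens.P {ω | ∃ m : ℕ, η * cst d m < SS ens L m ω} ≤
      4 ^ d * (∫⁻ ω, fe ens L ω ∂ens.P) * η⁻¹ := by
  classical
  haveI := ens.isProb
  set I := ∫⁻ ω, fe ens L ω ∂ens.P with hI
  set G : ℕ → Set Ω := fun M => {ω | ∃ m, m ≤ M ∧ η * cst d m < SS ens L m ω} with hG
  have hGmeas : ∀ M, MeasurableSet (G M) := by
    intro M
    have hGeq : G M = ⋃ m, ⋃ (_ : m ≤ M), {ω | η * cst d m < SS ens L m ω} := by
      ext ω; simp [hG]
    rw [hGeq]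
    exact MeasurableSet.iUnion fun m => MeasurableSet.iUnion fun _ =>
      measurableSet_lt measurable_const (measurable_SS ens L m)
  have key : ∀ M : ℕ, ens.P (G M) ≤ 4 ^ d * I * η⁻¹ := by
    intro M
    set c : ℝ≥0∞ := cst d M with hc
    -- pointwise covering bound
    have hpoint : ∀ ω : Ω,
        ((((BB d M).filter fun x => ens.θ x ω ∈ G M).card : ℝ≥0∞)) * η ≤
          2 ^ d * SS ens L (M + M) ω := by
      intro ω
      set F : ZD d → ℝ≥0∞ := fun y => fe ens L (ens.θ y ω) with hF
      set E := (BB d M).filter (fun x => ens.θ x ω ∈ G M) with hEdef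
      have hex : ∀ x ∈ E, ∃ m : ℕ, m ≤ M ∧
          η * (((2 * m + 1) ^ d : ℕ) : ℝ≥0∞) < ∑ y ∈ ballZ x m, F y := by
        intro x hx
        obtain ⟨m, hmM, hmlt⟩ := (Finset.mem_filter.1 hx).2
        refine ⟨m, hmM, ?_⟩
        rw [← SS_comp ens L m x ω]
        exact hmlt
      choose! r hr1 hr2 using hex
      have hdm := discrete_maximal η F M M E (Finset.filter_subset _ _) r hr1 hr2
      calc ((E.card : ℝ≥0∞)) * η ≤ 2 ^ d * ∑ y ∈ BB d (M + M), F y := hdm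
        _ = 2 ^ d * SS ens L (M + M) ω := rfl
    -- integrate the pointwise bound
    have hcard_eq : ∀ ω : Ω,
        ((((BB d M).filter fun x => ens.θ x ω ∈ G M).card : ℝ≥0∞)) =
          ∑ x ∈ BB d M, (ens.θ x ⁻¹' G M).indicator (1 : Ω → ℝ≥0∞) ω := by
      intro ω
      simp only [Set.indicator_apply, Set.mem_preimage, Pi.one_apply]
      rw [Finset.sum_boole]
    have hmeas_ind : ∀ x : ZD d,
        Measurable ((ens.θ x ⁻¹' G M).indicator (1 : Ω → ℝ≥0∞)) := fun x =>
      measurable_one.indicator ((ens.θ_measurePreserving x).measurable (hGmeas M))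
    have hint1 : ∫⁻ ω, ((((BB d M).filter fun x => ens.θ x ω ∈ G M).card : ℝ≥0∞)) ∂ens.P
        = c * ens.P (G M) := by
      calc ∫⁻ ω, ((((BB d M).filter fun x => ens.θ x ω ∈ G M).card : ℝ≥0∞)) ∂ens.P
          = ∫⁻ ω, ∑ x ∈ BB d M, (ens.θ x ⁻¹' G M).indicator (1 : Ω → ℝ≥0∞) ω ∂ens.P := by
            exact lintegral_congr fun ω => hcard_eq ω
        _ = ∑ x ∈ BB d M, ∫⁻ ω, (ens.θ x ⁻¹' G M).indicator (1 : Ω → ℝ≥0∞) ω ∂ens.P :=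
            lintegral_finset_sum _ (fun x _ => hmeas_ind x)
        _ = ∑ x ∈ BB d M, ens.P (G M) := by
            refine Finset.sum_congr rfl fun x _ => ?_
            rw [lintegral_indicator_one
              ((ens.θ_measurePreserving x).measurable (hGmeas M)),
              (ens.θ_measurePreserving x).measure_preimage
                (hGmeas M).nullMeasurableSet]
        _ = c * ens.P (G M) := by
            rw [Finset.sum_const, card_BB, nsmul_eq_mul, hc, cst]
    have hint2 : ∫⁻ ω, 2 ^ d * SS ens L (M + M) ω ∂ens.P
        = 2 ^ d * (((2 * (M + M) + 1) ^ d : ℕ) : ℝ≥0∞) * I := by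
      rw [lintegral_const_mul _ (measurable_SS ens L (M + M))]
      have : ∫⁻ ω, SS ens L (M + M) ω ∂ens.P = ∑ z ∈ BB d (M + M), I := by
        unfold SS
        rw [lintegral_finset_sum (BB d (M + M))
          (f := fun z ω => fe ens L (ens.θ z ω)) (fun z _ =>
          (measurable_fe ens L).comp (ens.θ_measurePreserving z).measurable)]
        exact Finset.sum_congr rfl fun z _ =>
          (ens.θ_measurePreserving z).lintegral_comp (measurable_fe ens L)
      rw [this, Finset.sum_const, card_BB, nsmul_eq_mul, mul_assoc]
    -- combine
    have hmain : c * ens.P (G M) * η ≤ 2 ^ d * (((2*(M+M)+1) ^ d : ℕ) : ℝ≥0∞) * I := by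
      calc c * ens.P (G M) * η
          = (∫⁻ ω, ((((BB d M).filter fun x => ens.θ x ω ∈ G M).card : ℝ≥0∞)) ∂ens.P) * η := by
            rw [hint1]
        _ = ∫⁻ ω, ((((BB d M).filter fun x => ens.θ x ω ∈ G M).card : ℝ≥0∞)) * η ∂ens.P := by
            rw [lintegral_mul_const _ (by
              simp only [hcard_eq]
              exact Finset.measurable_sum _ fun x _ => hmeas_ind x)]
        _ ≤ ∫⁻ ω, 2 ^ d * SS ens L (M + M) ω ∂ens.P := lintegral_mono hpoint
        _ = 2 ^ d * (((2*(M+M)+1) ^ d : ℕ) : ℝ≥0∞) * I := hint2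
    have hstep : 2 ^ d * (((2*(M+M)+1) ^ d : ℕ) : ℝ≥0∞) * I ≤ 4 ^ d * c * I := by
      refine mul_le_mul_left ?_ I
      have hnat : (2*(M+M)+1) ^ d ≤ 2 ^ d * (2*M+1) ^ d := by
        rw [← Nat.mul_pow]
        exact Nat.pow_le_pow_left (by omega) d
      calc (2:ℝ≥0∞) ^ d * (((2*(M+M)+1) ^ d : ℕ) : ℝ≥0∞)
          ≤ 2 ^ d * ((2 ^ d * (2*M+1) ^ d : ℕ) : ℝ≥0∞) :=
            mul_le_mul_right (by exact_mod_cast Nat.cast_le.2 hnat) _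
        _ = 4 ^ d * c := by
            push_cast [hc, cst]
            ring_nf
            rw [show ((4:ℝ≥0∞))^d = ((2:ℝ≥0∞)^d)*(2^d) by rw [← mul_pow]; norm_num]
            ring
    have hfinal : (c * η) * ens.P (G M) ≤ (c * η) * (4 ^ d * I * η⁻¹) := by
      have h1 : (c * η) * ens.P (G M) = c * ens.P (G M) * η := by ring
      have h2 : (c * η) * (4 ^ d * I * η⁻¹) = 4 ^ d * c * I * (η * η⁻¹) := by ring
      rw [h1, h2, ENNReal.mul_inv_cancel hη0 hηt, mul_one]
      exact le_trans hmain hstep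
    exact (ENNReal.mul_le_mul_iff_right
      (mul_ne_zero (cst_ne_zero M) hη0)
      (ENNReal.mul_ne_top (cst_ne_top M) hηt)).1 hfinal
  have hunion : {ω | ∃ m : ℕ, η * cst d m < SS ens L m ω} = ⋃ M, G M := by
    ext ω
    simp only [Set.mem_setOf_eq, Set.mem_iUnion, hG]
    exact ⟨fun ⟨m, hm⟩ => ⟨m, m, le_rfl, hm⟩, fun ⟨M, m, _, hm⟩ => ⟨m, hm⟩⟩
  rw [hunion, Directed.measure_iUnion (Monotone.directed_le fun M M' hMM' ω => by
    rintro ⟨m, hm1, hm2⟩; exact ⟨m, hm1.trans hMM', hm2⟩)]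
  exact iSup_le key

lemma cst_eq_ofReal (m : ℕ) : cst d m = ENNReal.ofReal ((2 * (m:ℝ) + 1) ^ d) := by
  rw [cst]
  rw [← ENNReal.ofReal_natCast]
  congr 1
  push_cast
  ring

/-- Exact invariance of the limsup of box averages. -/
lemma slim_comp_le (L : ℝ) (x : ZD d) (ω : Ω) :
    slim ens L (ens.θ x ω) ≤ slim ens L ω := by
  set c : ℕ := Finset.univ.sup (fun i => (x i).natAbs) with hcdef
  have hSS : ∀ m : ℕ, SS ens L m (ens.θ x ω) ≤ SS ens L (m + c) ω := by
    intro m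
    rw [SS_comp]
    refine Finset.sum_le_sum_of_subset ?_
    intro y hy
    rw [mem_ballZ] at hy
    rw [mem_BB]
    intro i
    have h1 := hy i
    have h2 : (x i).natAbs ≤ c := Finset.le_sup (f := fun i => (x i).natAbs) (Finset.mem_univ i)
    push_cast
    omega
  refine le_of_forall_gt_imp_ge_of_dense fun b hb => ?_
  by_cases hbt : b = ⊤
  · simp [hbt]
  obtain ⟨b', hb1, hb2⟩ := exists_between hb
  have hb'0 : b' ≠ 0 := fun h => by simp [h] at hb1
  have hb't : b' ≠ ⊤ := ne_top_of_lt hb2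
  set β' := b'.toReal with hβ'
  set β := b.toReal with hβ
  have hββ : β' < β := ENNReal.toReal_lt_toReal hb't hbt |>.2 hb2
  have hβ'pos : 0 < β' := ENNReal.toReal_pos hb'0 hb't
  -- eventual bound on the shifted averages
  have hev1 : ∀ᶠ m in atTop, avg ens L (m + c) ω < b' := by
    have h1 : ∀ᶠ m in atTop, avg ens L m ω < b' :=
      eventually_lt_of_limsup_lt hb1
    exact (tendsto_add_atTop_nat c).eventually h1
  -- eventual ratio bound
  have hev2 : ∀ᶠ m in atTop, cst d (m + c) * b' ≤ cst d m * b := by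
    have h2m : Tendsto (fun m : ℕ => (2 * (m:ℝ) + 1)) atTop atTop := by
      apply Filter.tendsto_atTop_add_const_right
      exact Tendsto.const_mul_atTop two_pos tendsto_natCast_atTop_atTop
    have hratio0 : Tendsto (fun m : ℕ => (2 * (c:ℝ)) / (2 * (m:ℝ) + 1)) atTop (𝓝 0) :=
      Filter.Tendsto.div_atTop tendsto_const_nhds h2m
    have hratio : Tendsto
        (fun m : ℕ => ((2 * ((m:ℝ) + c) + 1) / (2 * (m:ℝ) + 1)) ^ d * β') atTop
        (𝓝 β') := by
      have heq : ∀ m : ℕ, (2 * ((m:ℝ) + c) + 1) / (2 * (m:ℝ) + 1)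
          = 1 + (2 * (c:ℝ)) / (2 * (m:ℝ) + 1) := by
        intro m
        have hne : (2 * (m:ℝ) + 1) ≠ 0 := by positivity
        field_simp
        ring
      simp only [heq]
      have h1 : Tendsto (fun m : ℕ => (1 + (2 * (c:ℝ)) / (2 * (m:ℝ) + 1)) ^ d)
          atTop (𝓝 1) := by
        have := (tendsto_const_nhds (x := (1:ℝ)) (f := atTop (α := ℕ))).add hratio0
        rw [add_zero] at this
        simpa using this.pow d
      have := h1.mul_const β'
      rwa [one_mul] at this
    have hevR : ∀ᶠ m : ℕ in atTop,
        ((2 * ((m:ℝ) + c) + 1) / (2 * (m:ℝ) + 1)) ^ d * β' < β :=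
      hratio.eventually_lt_const hββ
    filter_upwards [hevR] with m hm
    have hne : (2 * (m:ℝ) + 1) ≠ 0 := by positivity
    have hreal : (2 * ((m:ℝ) + c) + 1) ^ d * β' ≤ (2 * (m:ℝ) + 1) ^ d * β := by
      have hB : (0:ℝ) < (2 * (m:ℝ) + 1) ^ d := by positivity
      have h3 : (2 * ((m:ℝ) + c) + 1) ^ d * β' / (2 * (m:ℝ) + 1) ^ d < β := by
        rw [div_pow] at hm
        rwa [div_mul_eq_mul_div] at hm
      have h4 := (div_lt_iff₀ hB).1 h3
      linarith
    rw [cst_eq_ofReal, cst_eq_ofReal, ← ENNReal.ofReal_toReal hb't,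
      ← ENNReal.ofReal_toReal hbt,
      ← ENNReal.ofReal_mul (by positivity), ← ENNReal.ofReal_mul (by positivity)]
    apply ENNReal.ofReal_le_ofReal
    calc (2 * ((m + c : ℕ) : ℝ) + 1) ^ d * b'.toReal
        = (2 * ((m:ℝ) + c) + 1) ^ d * β' := by push_cast; ring_nf; rfl
      _ ≤ (2 * (m:ℝ) + 1) ^ d * β := hreal
      _ = (2 * (m:ℝ) + 1) ^ d * b.toReal := rfl
  -- combine
  have hev : ∀ᶠ m in atTop, avg ens L m (ens.θ x ω) ≤ b := by
    filter_upwards [hev1, hev2] with m h1 h2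
    have hSSm : SS ens L (m + c) ω = cst d (m + c) * avg ens L (m + c) ω := by
      rw [avg, ← mul_assoc, ENNReal.mul_inv_cancel (cst_ne_zero _) (cst_ne_top _),
        one_mul]
    calc avg ens L m (ens.θ x ω) = (cst d m)⁻¹ * SS ens L m (ens.θ x ω) := rfl
      _ ≤ (cst d m)⁻¹ * SS ens L (m + c) ω := mul_le_mul_right (hSS m) _
      _ = (cst d m)⁻¹ * (cst d (m + c) * avg ens L (m + c) ω) := by rw [hSSm]
      _ ≤ (cst d m)⁻¹ * (cst d (m + c) * b') :=
          mul_le_mul_right (mul_le_mul_right h1.le _) _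
      _ ≤ (cst d m)⁻¹ * (cst d m * b) := mul_le_mul_right h2 _
      _ = b := by
          rw [← mul_assoc, ENNReal.inv_mul_cancel (cst_ne_zero _) (cst_ne_top _),
            one_mul]
  exact limsup_le_of_le (by isBoundedDefault) hev

lemma slim_comp_eq (L : ℝ) (x : ZD d) (ω : Ω) :
    slim ens L (ens.θ x ω) = slim ens L ω := by
  refine le_antisymm (slim_comp_le ens L x ω) ?_
  have h := slim_comp_le ens L (-x) (ens.θ x ω)
  have hid : ens.θ (-x) (ens.θ x ω) = ω := by
    have := congrFun (ens.θ_add (-x) x) ω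
    simp only [neg_add_cancel, ens.θ_zero, Function.comp_apply, id_eq] at this
    exact this.symm
  rwa [hid] at h

/-- A.s. the limsup is at most `η`, provided the mean is small. -/
lemma ae_slim_le (L : ℝ) {η : ℝ≥0∞} (hη0 : η ≠ 0) (hηt : η ≠ ⊤)
    (hI : ∫⁻ ω, fe ens L ω ∂ens.P < η / (2 * 4 ^ d)) :
    ∀ᵐ ω ∂ens.P, slim ens L ω ≤ η := by
  haveI := ens.isProb
  set I := ∫⁻ ω, fe ens L ω ∂ens.P with hIdef
  set A := {ω | slim ens L ω ≤ η} with hA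
  have hAmeas : MeasurableSet A :=
    measurableSet_le (measurable_slim ens L) measurable_const
  have hInv : ∀ z, ens.θ z ⁻¹' A = A := by
    intro z
    ext ω
    simp only [Set.mem_preimage, hA, Set.mem_setOf_eq]
    rw [slim_comp_eq ens L z ω]
  have hsub : Aᶜ ⊆ {ω | ∃ m : ℕ, η * cst d m < SS ens L m ω} := by
    intro ω hω
    simp only [Set.mem_compl_iff, hA, Set.mem_setOf_eq, not_le] at hω
    obtain ⟨m, hm⟩ := (frequently_lt_of_lt_limsup (by isBoundedDefault) hω).exists
    refine ⟨m, ?_⟩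
    have h1 : cst d m * η < cst d m * avg ens L m ω :=
      (ENNReal.mul_lt_mul_iff_right (cst_ne_zero m) (cst_ne_top m)).2 hm
    rw [avg, ← mul_assoc, ENNReal.mul_inv_cancel (cst_ne_zero m) (cst_ne_top m),
      one_mul, mul_comm] at h1
    exact h1
  have h4d0 : ((4:ℝ≥0∞) ^ d) ≠ 0 := pow_ne_zero d (by norm_num)
  have h4dt : ((4:ℝ≥0∞) ^ d) ≠ ⊤ := ENNReal.pow_ne_top (by norm_num)
  have hηinv0 : η⁻¹ ≠ 0 := ENNReal.inv_ne_zero.2 hηt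
  have hηinvt : η⁻¹ ≠ ⊤ := ENNReal.inv_ne_top.2 hη0
  have hlt1 : 4 ^ d * I * η⁻¹ < 1 := by
    have hk0 : (4:ℝ≥0∞) ^ d * η⁻¹ ≠ 0 := mul_ne_zero h4d0 hηinv0
    have hkt : (4:ℝ≥0∞) ^ d * η⁻¹ ≠ ⊤ := ENNReal.mul_ne_top h4dt hηinvt
    have h1 : 4 ^ d * I * η⁻¹ = I * (4 ^ d * η⁻¹) := by ring
    have h2 : I * (4 ^ d * η⁻¹) < (η / (2 * 4 ^ d)) * (4 ^ d * η⁻¹) :=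
      (ENNReal.mul_lt_mul_iff_left hk0 hkt).2 hI
    have h3 : (η / (2 * 4 ^ d)) * (4 ^ d * η⁻¹) = 2⁻¹ := by
      rw [ENNReal.div_eq_inv_mul, ENNReal.mul_inv (Or.inl (by norm_num)) (Or.inl (by norm_num))]
      calc 2⁻¹ * ((4:ℝ≥0∞) ^ d)⁻¹ * η * (4 ^ d * η⁻¹)
          = 2⁻¹ * (((4:ℝ≥0∞) ^ d)⁻¹ * 4 ^ d) * (η * η⁻¹) := by ring
        _ = 2⁻¹ := by
            rw [ENNReal.inv_mul_cancel h4d0 h4dt, ENNReal.mul_inv_cancel hη0 hηt,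
              mul_one, mul_one]
    rw [h1]
    calc I * (4 ^ d * η⁻¹) < (η / (2 * 4 ^ d)) * (4 ^ d * η⁻¹) := h2
      _ = 2⁻¹ := h3
      _ < 1 := by
          rw [ENNReal.inv_lt_one]
          norm_num
  have hPc : ens.P Aᶜ < 1 :=
    lt_of_le_of_lt (le_trans (measure_mono hsub) (maximal_ineq ens L hη0 hηt)) hlt1
  have hA1 : ens.P A = 1 := by
    rcases ens.ergodic A hAmeas hInv with h0 | h1
    · exfalso
      have hc1 : ens.P Aᶜ = 1 := by
        rw [measure_compl hAmeas (measure_ne_top _ _), h0, measure_univ, tsub_zero]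
      rw [hc1] at hPc
      exact lt_irrefl _ hPc
    · exact h1
  have hAc0 : ens.P Aᶜ = 0 := by
    rw [measure_compl hAmeas (measure_ne_top _ _), hA1, measure_univ, tsub_self]
  rw [ae_iff]
  convert hAc0 using 2
  exact rfl

/-- A.e. identification of shifted cube masses. -/
lemma ae_cube_mass (L : ℝ) :
    ∀ᵐ ω ∂ens.P, ∀ w : ZD d, ens.Q ω (Sset L w) = fe ens L (ens.θ (-w) ω) := by
  rw [MeasureTheory.ae_all_iff]
  intro w
  filter_upwards [ens.Q_equivariant (-w)] with ω hω
  have hmeasshift : Measurable fun p : Euc d × Euc d =>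
      (p.1 + intVec d (-w), p.2 + intVec d (-w)) :=
    ((continuous_fst.add continuous_const).prodMk
      (continuous_snd.add continuous_const)).measurable
  have hshift : (fun p : Euc d × Euc d => (p.1 + intVec d (-w), p.2 + intVec d (-w)))
      ⁻¹' (Sset L 0) = Sset L w := by
    ext p
    simp only [Set.mem_preimage, Sset, cube, Set.mem_setOf_eq, Pi.zero_apply,
      Int.cast_zero, zero_add]
    have hcoord : ∀ i, (p.1 + intVec d (-w)) i = p.1 i - w i := by
      intro i
      have : (p.1 + intVec d (-w)) i = p.1 i + intVec d (-w) i := rfl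
      rw [this]
      simp [intVec]
      ring
    have hnorm : (p.2 + intVec d (-w)) - (p.1 + intVec d (-w)) = p.2 - p.1 := by
      abel
    rw [hnorm]
    constructor
    · rintro ⟨hc, hn⟩
      refine ⟨fun i => ?_, hn⟩
      have := hc i
      rw [hcoord i] at this
      constructor <;> linarith [this.1, this.2]
    · rintro ⟨hc, hn⟩
      refine ⟨fun i => ?_, hn⟩
      rw [hcoord i]
      have := hc i
      constructor <;> linarith [this.1, this.2]
  show ens.Q ω (Sset L w) = ens.Q (ens.θ (-w) ω) (Sset L 0)
  rw [hω, Measure.map_apply hmeasshift (measurableSet_Sset L 0), hshift]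

/-- Geometric cover of the box `(-R,R)^d` by unit cubes. -/
lemma cover_subset (L R : ℝ) (hR : 0 ≤ R) :
    {p : Euc d × Euc d | (∀ i, p.1 i ∈ Set.Ioo (-R) R) ∧ L < ‖p.2 - p.1‖} ⊆
      ⋃ w ∈ BB d ⌈R⌉₊, Sset L w := by
  rintro p ⟨hbox, hL⟩
  set w : ZD d := fun i => ⌊p.1 i⌋ with hw
  have hwmem : w ∈ BB d ⌈R⌉₊ := by
    rw [mem_BB]
    intro i
    obtain ⟨h1, h2⟩ := hbox i
    constructor
    · rw [hw]
      rw [Int.le_floor]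
      push_cast
      linarith [Nat.le_ceil R]
    · have h3 : (⌊p.1 i⌋ : ℝ) < (⌈R⌉₊ : ℝ) :=
        lt_of_le_of_lt (Int.floor_le _) (lt_of_lt_of_le h2 (Nat.le_ceil R))
      have h4 : (⌊p.1 i⌋ : ℤ) < (⌈R⌉₊ : ℤ) := by exact_mod_cast h3
      exact h4.le
  refine Set.mem_biUnion hwmem ⟨fun i => ?_, hL⟩
  exact ⟨Int.floor_le _, Int.lt_floor_add_one _⟩

/-- Reindexing the box sum by negation. -/
lemma sum_neg_eq_SS (L : ℝ) (m : ℕ) (ω : Ω) :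
    ∑ w ∈ BB d m, fe ens L (ens.θ (-w) ω) = SS ens L m ω := by
  unfold SS
  refine Finset.sum_nbij' (fun w => -w) (fun z => -z) ?_ ?_ ?_ ?_ ?_
  · intro w hw
    rw [mem_BB] at hw ⊢
    intro i
    have := hw i
    simp only [Pi.neg_apply]
    omega
  · intro z hz
    rw [mem_BB] at hz ⊢
    intro i
    have := hz i
    simp only [Pi.neg_apply]
    omega
  · intro w _; simp
  · intro z _; simp
  · intro w _; rfl

end Main

end ErgAux

/-- **Lemma 2.1 (the ergodic `L⁰` estimate).** For every `ε > 0` there is a deterministic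
`L < ∞` such that almost surely, for all sufficiently large `R`, the `Q`-mass of pairs
`(x, y)` with `x ∈ (-R, R)^d` and `|y - x| > L` is at most `(εR)^d`. -/
theorem ergodic_L0_estimate
    (d : ℕ) {Ω : Type*} [MeasurableSpace Ω] (ens : PoissonMatchingEnsemble d Ω)
    (ε : ℝ) (hε : 0 < ε) :
    ∃ L : ℝ, ∀ᵐ ω ∂ens.P, ∃ rstar : ℝ, ∀ R : ℝ, rstar ≤ R →
      ens.Q ω {p : Euc d × Euc d |
          (∀ i, p.1 i ∈ Set.Ioo (-R) R) ∧ L < ‖p.2 - p.1‖} ≤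
        ENNReal.ofReal ((ε * R) ^ d) := by
  classical
  haveI := ens.isProb
  set η : ℝ≥0∞ := ENNReal.ofReal (ε ^ d / (2 * 10 ^ d)) with hη
  have hη0 : η ≠ 0 := by
    rw [hη]
    exact (ENNReal.ofReal_pos.2 (by positivity)).ne'
  have hηt : η ≠ ⊤ := ENNReal.ofReal_ne_top
  have hδ0 : (0 : ℝ≥0∞) < η / (2 * 4 ^ d) :=
    ENNReal.div_pos hη0 (ENNReal.mul_ne_top (by norm_num)
      (ENNReal.pow_ne_top (by norm_num)))
  obtain ⟨n₀, hn₀⟩ :=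
    ((ErgAux.tendsto_lintegral_fe ens).eventually_lt_const hδ0).exists
  refine ⟨(n₀ : ℝ), ?_⟩
  filter_upwards [ErgAux.ae_slim_le ens (n₀ : ℝ) hη0 hηt hn₀,
    ErgAux.ae_cube_mass ens (n₀ : ℝ)] with ω hslim hcube
  have h2η : η < 2 * η := by
    conv_lhs => rw [← one_mul η]
    rw [ENNReal.mul_lt_mul_iff_left hη0 hηt]
    norm_num
  obtain ⟨M, hM⟩ := Filter.eventually_atTop.1
    (Filter.eventually_lt_of_limsup_lt (lt_of_le_of_lt hslim h2η))
  refine ⟨max (M : ℝ) 1, fun R hR => ?_⟩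
  have hR1 : (1 : ℝ) ≤ R := le_trans (le_max_right _ _) hR
  have hRM : (M : ℝ) ≤ R := le_trans (le_max_left _ _) hR
  set m := ⌈R⌉₊ with hm
  have hMm : M ≤ m := by
    have h1 : (M : ℝ) ≤ (m : ℝ) := le_trans hRM (Nat.le_ceil R)
    exact_mod_cast h1
  calc ens.Q ω {p : Euc d × Euc d |
        (∀ i, p.1 i ∈ Set.Ioo (-R) R) ∧ (n₀ : ℝ) < ‖p.2 - p.1‖}
      ≤ ens.Q ω (⋃ w ∈ ErgAux.BB d m, ErgAux.Sset (n₀ : ℝ) w) :=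
        measure_mono (ErgAux.cover_subset (n₀ : ℝ) R (by linarith))
    _ ≤ ∑ w ∈ ErgAux.BB d m, ens.Q ω (ErgAux.Sset (n₀ : ℝ) w) :=
        measure_biUnion_finset_le _ _
    _ = ∑ w ∈ ErgAux.BB d m, ErgAux.fe ens (n₀ : ℝ) (ens.θ (-w) ω) :=
        Finset.sum_congr rfl fun w _ => hcube w
    _ = ErgAux.SS ens (n₀ : ℝ) m ω := ErgAux.sum_neg_eq_SS ens (n₀ : ℝ) m ω
    _ ≤ ErgAux.cst d m * (2 * η) := by
        have h1 : ErgAux.avg ens (n₀ : ℝ) m ω < 2 * η := hM m hMm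
        have h2 : ErgAux.SS ens (n₀ : ℝ) m ω =
            ErgAux.cst d m * ErgAux.avg ens (n₀ : ℝ) m ω := by
          rw [ErgAux.avg, ← mul_assoc,
            ENNReal.mul_inv_cancel (ErgAux.cst_ne_zero m) (ErgAux.cst_ne_top m),
            one_mul]
        rw [h2]
        exact mul_le_mul_right h1.le _
    _ ≤ ENNReal.ofReal ((ε * R) ^ d) := by
        have hmR : (m : ℝ) < R + 1 := Nat.ceil_lt_add_one (by linarith)
        have hcst : ErgAux.cst d m ≤ ENNReal.ofReal ((5 * R) ^ d) := by
          rw [ErgAux.cst_eq_ofReal]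
          apply ENNReal.ofReal_le_ofReal
          apply pow_le_pow_left₀ (by positivity) _ d
          linarith
        have h2e : (2 : ℝ≥0∞) * η = ENNReal.ofReal (2 * (ε ^ d / (2 * 10 ^ d))) := by
          rw [hη, ENNReal.ofReal_mul (by norm_num), ENNReal.ofReal_ofNat]
        calc ErgAux.cst d m * (2 * η)
            ≤ ENNReal.ofReal ((5 * R) ^ d) * (2 * η) := mul_le_mul_left hcst _
          _ = ENNReal.ofReal ((5 * R) ^ d * (2 * (ε ^ d / (2 * 10 ^ d)))) := by
              rw [h2e, ← ENNReal.ofReal_mul (by positivity)]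
          _ ≤ ENNReal.ofReal ((ε * R) ^ d) := by
              apply ENNReal.ofReal_le_ofReal
              have h2d : (1 : ℝ) ≤ 2 ^ d := one_le_pow₀ (by norm_num)
              have heq : (5 * R) ^ d * (2 * (ε ^ d / (2 * 10 ^ d)))
                  = (ε * R) ^ d / 2 ^ d := by
                rw [show (10 : ℝ) = 2 * 5 by norm_num]
                have h1 : ((2 : ℝ) * 5) ^ d ≠ 0 := by positivity
                have h2 : (2 : ℝ) ^ d ≠ 0 := by positivity
                field_simp
                ring_nf
                rw [show (10:ℝ) ^ d = 2 ^ d * 5 ^ d by rw [← mul_pow]; norm_num]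
                ring
              rw [heq]
              exact div_le_self (by positivity) h2d

end
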